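/- Let φ₁₁ be a 2×3 matrix of linear forms in ℂ[X,Y,Z] whose three maximal minors ζ₁, ζ₂, ζ₃ are not all zero and have no common non-constant divisor, and let φ₂₂ be a 3×2 matrix of linear forms such that left-multiplication by φ₂₂ is an injective map (ℂ[X,Y,Z])² → (ℂ[X,Y,Z])³. Then a pair (u,v), with u a 2×3 matrix of linear forms and v a 3×2 matrix of linear forms, satisfies v·φ₁₁ + φ₂₂·u = 0 if and only if there exists a 2×2 complex (constant) matrix α with u = α·φ₁₁ and v = −φ₂₂·α. -/

import Mathlib

open MvPolynomial

abbrev R3 := MvPolynomial (Fin 3) ℂ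

/-- The three maximal (2×2) minors of a 2×3 matrix. -/
noncomputable def minors23 (φ : Matrix (Fin 2) (Fin 3) R3) : Fin 3 → R3 :=
  ![φ 0 1 * φ 1 2 - φ 0 2 * φ 1 1,
    φ 0 0 * φ 1 2 - φ 0 2 * φ 1 0,
    φ 0 0 * φ 1 1 - φ 0 1 * φ 1 0]

lemma homogComp_mul_homog (p q : R3) (m n : ℕ) (hq : q.IsHomogeneous n) :
    homogeneousComponent (m + n) (p * q) = homogeneousComponent m p * q := by
  have hrw : p * q = ∑ i ∈ Finset.range (p.totalDegree + 1), homogeneousComponent i p * q := by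
    rw [← Finset.sum_mul, sum_homogeneousComponent]
  rw [hrw, map_sum]
  have key : ∀ i, (homogeneousComponent (m + n)) (homogeneousComponent i p * q)
      = if m = i then homogeneousComponent i p * q else 0 := by
    intro i
    rw [homogeneousComponent_of_mem ((mem_homogeneousSubmodule _ _).2
      ((homogeneousComponent_isHomogeneous i p).mul hq))]
    by_cases hmi : m = i
    · simp [hmi]
    · rw [if_neg (by omega), if_neg hmi]
  simp_rw [key]
  rw [Finset.sum_ite_eq (Finset.range (p.totalDegree + 1)) m
    (fun i => homogeneousComponent i p * q)]
  split_ifs with h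
  · rfl
  · rw [Finset.mem_range, not_lt] at h
    rw [homogeneousComponent_eq_zero _ p (by omega), zero_mul]

lemma top_component_ne_zero {p : R3} (hp : p ≠ 0) :
    homogeneousComponent p.totalDegree p ≠ 0 := by
  obtain ⟨d, hd, hdeg⟩ := Finset.exists_mem_eq_sup p.support
    (by simpa using hp) (fun s : Fin 3 →₀ ℕ => s.sum fun _ e => e)
  intro h0
  have hc := coeff_homogeneousComponent (σ := Fin 3) (R := ℂ) p.totalDegree p d
  rw [h0] at hc
  have hdd : d.degree = p.totalDegree := by
    rw [show p.totalDegree = d.sum fun _ e => e from hdeg]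
    simp [Finsupp.degree, Finsupp.sum]
    rfl
  rw [if_pos hdd] at hc
  exact (mem_support_iff.1 hd) hc.symm

lemma eq_C_of_mul_homog {p q : R3} {n : ℕ} (hq : q.IsHomogeneous n) (hq0 : q ≠ 0)
    (hpq : (p * q).IsHomogeneous n) : ∃ c : ℂ, p = C c := by
  by_cases hp : p = 0
  · exact ⟨0, by simp [hp]⟩
  refine ⟨p.coeff 0, ?_⟩
  have htd : p.totalDegree = 0 := by
    by_contra hne
    have h1 : homogeneousComponent (p.totalDegree + n) (p * q)
        = homogeneousComponent p.totalDegree p * q := homogComp_mul_homog p q _ n hq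
    have h2 : homogeneousComponent (p.totalDegree + n) (p * q) = 0 := by
      rw [homogeneousComponent_of_mem ((mem_homogeneousSubmodule _ _).2 hpq)]
      rw [if_neg (show p.totalDegree + n ≠ n by omega)]
    exact mul_ne_zero (top_component_ne_zero hp) hq0 (h1 ▸ h2)
  have hh : p.IsHomogeneous 0 := isHomogeneous_of_totalDegree_zero _ htd
  have hcmp := homogeneousComponent_of_mem (m := 0) ((mem_homogeneousSubmodule _ _).2 hh)
  rw [if_pos rfl] at hcmp
  rw [← homogeneousComponent_zero, hcmp]

lemma proportional (ζ A : Fin 3 → R3) (K : Fin 3) (hK : ζ K ≠ 0)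
    (hnocd : ∀ d : R3, (∀ k, d ∣ ζ k) → ∃ c : ℂ, d = C c)
    (hcross : ∀ j k, A j * ζ k = A k * ζ j) :
    ∃ a : R3, ∀ j, A j = a * ζ j := by
  letI : GCDMonoid R3 := UniqueFactorizationMonoid.toGCDMonoid R3
  obtain ⟨p, q, hA, hz, hunit⟩ := extract_gcd (A K) (ζ K)
  set g := gcd (A K) (ζ K) with hgdef
  have hg : g ≠ 0 := fun h => hK (by rw [hz, h, zero_mul])
  have hq0 : q ≠ 0 := fun h => hK (by rw [hz, h, mul_zero])
  have hrel : IsRelPrime q p := (gcd_isUnit_iff_isRelPrime.1 hunit).symm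
  have key : ∀ j, p * ζ j = A j * q := by
    intro j
    have hj := hcross K j
    rw [hA, hz] at hj
    apply mul_left_cancel₀ hg
    linear_combination hj
  have hdvd : ∀ j, q ∣ ζ j := by
    intro j
    refine hrel.dvd_of_dvd_mul_left ⟨A j, by linear_combination key j⟩
  obtain ⟨c, hc⟩ := hnocd q hdvd
  have hc0 : c ≠ 0 := fun h => hq0 (by rw [hc, h, map_zero])
  have hCc : (C c : R3) * C c⁻¹ = 1 := by
    rw [← C_mul, mul_inv_cancel₀ hc0, C_1]
  have hCc0 : (C c : R3) ≠ 0 := by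
    simpa using hc0
  refine ⟨C c⁻¹ * p, fun j => ?_⟩
  apply mul_left_cancel₀ hCc0
  have h1 := key j
  rw [hc] at h1
  linear_combination -h1 - p * ζ j * hCc

lemma row_syzygy (φ : Matrix (Fin 2) (Fin 3) R3) (hφ : ∀ i j, (φ i j).IsHomogeneous 1)
    (hnz : ∃ k, minors23 φ k ≠ 0)
    (hnocd : ∀ d : R3, (∀ k, d ∣ minors23 φ k) → ∃ c : ℂ, d = C c)
    (w : Fin 3 → R3) (hw : ∀ j, (w j).IsHomogeneous 1)
    (hs : w 0 * minors23 φ 0 - w 1 * minors23 φ 1 + w 2 * minors23 φ 2 = 0) :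
    ∃ a b : ℂ, ∀ j, w j = C a * φ 0 j + C b * φ 1 j := by
  have e0 : minors23 φ 0 = φ 0 1 * φ 1 2 - φ 0 2 * φ 1 1 := rfl
  have e1 : minors23 φ 1 = φ 0 0 * φ 1 2 - φ 0 2 * φ 1 0 := rfl
  have e2 : minors23 φ 2 = φ 0 0 * φ 1 1 - φ 0 1 * φ 1 0 := rfl
  rw [e0, e1, e2] at hs
  obtain ⟨K, hK⟩ := hnz
  set A : Fin 3 → R3 := ![w 1 * φ 1 2 - w 2 * φ 1 1, w 0 * φ 1 2 - w 2 * φ 1 0,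
    w 0 * φ 1 1 - w 1 * φ 1 0] with hAdef
  set B : Fin 3 → R3 := ![φ 0 1 * w 2 - φ 0 2 * w 1, φ 0 0 * w 2 - φ 0 2 * w 0,
    φ 0 0 * w 1 - φ 0 1 * w 0] with hBdef
  have eA0 : A 0 = w 1 * φ 1 2 - w 2 * φ 1 1 := rfl
  have eA1 : A 1 = w 0 * φ 1 2 - w 2 * φ 1 0 := rfl
  have eA2 : A 2 = w 0 * φ 1 1 - w 1 * φ 1 0 := rfl
  have eB0 : B 0 = φ 0 1 * w 2 - φ 0 2 * w 1 := rfl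
  have eB1 : B 1 = φ 0 0 * w 2 - φ 0 2 * w 0 := rfl
  have eB2 : B 2 = φ 0 0 * w 1 - φ 0 1 * w 0 := rfl
  have hcA : ∀ j k, A j * minors23 φ k = A k * minors23 φ j := by
    intro j k
    fin_cases j <;> fin_cases k <;>
      simp only [Fin.zero_eta, Fin.mk_one, Fin.reduceFinMk, Fin.isValue, eA0, eA1, eA2, e0, e1, e2] <;>
      first
        | ring1
        | linear_combination (φ 1 2) * hs
        | linear_combination (-(φ 1 2)) * hs
        | linear_combination (φ 1 1) * hs
        | linear_combination (-(φ 1 1)) * hs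
        | linear_combination (φ 1 0) * hs
        | linear_combination (-(φ 1 0)) * hs
  have hcB : ∀ j k, B j * minors23 φ k = B k * minors23 φ j := by
    intro j k
    fin_cases j <;> fin_cases k <;>
      simp only [Fin.zero_eta, Fin.mk_one, Fin.reduceFinMk, Fin.isValue, eB0, eB1, eB2, e0, e1, e2] <;>
      first
        | ring1
        | linear_combination (φ 0 2) * hs
        | linear_combination (-(φ 0 2)) * hs
        | linear_combination (φ 0 1) * hs
        | linear_combination (-(φ 0 1)) * hs
        | linear_combination (φ 0 0) * hs
        | linear_combination (-(φ 0 0)) * hs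
  obtain ⟨a', ha'⟩ := proportional (minors23 φ) A K hK hnocd hcA
  obtain ⟨b', hb'⟩ := proportional (minors23 φ) B K hK hnocd hcB
  have hζh : ∀ k, (minors23 φ k).IsHomogeneous 2 := by
    intro k
    fin_cases k
    · exact e0 ▸ ((hφ 0 1).mul (hφ 1 2)).sub ((hφ 0 2).mul (hφ 1 1))
    · exact e1 ▸ ((hφ 0 0).mul (hφ 1 2)).sub ((hφ 0 2).mul (hφ 1 0))
    · exact e2 ▸ ((hφ 0 0).mul (hφ 1 1)).sub ((hφ 0 1).mul (hφ 1 0))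
  have hAh : ∀ k, (A k).IsHomogeneous 2 := by
    intro k
    fin_cases k
    · exact eA0 ▸ ((hw 1).mul (hφ 1 2)).sub ((hw 2).mul (hφ 1 1))
    · exact eA1 ▸ ((hw 0).mul (hφ 1 2)).sub ((hw 2).mul (hφ 1 0))
    · exact eA2 ▸ ((hw 0).mul (hφ 1 1)).sub ((hw 1).mul (hφ 1 0))
  have hBh : ∀ k, (B k).IsHomogeneous 2 := by
    intro k
    fin_cases k
    · exact eB0 ▸ ((hφ 0 1).mul (hw 2)).sub ((hφ 0 2).mul (hw 1))
    · exact eB1 ▸ ((hφ 0 0).mul (hw 2)).sub ((hφ 0 2).mul (hw 0))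
    · exact eB2 ▸ ((hφ 0 0).mul (hw 1)).sub ((hφ 0 1).mul (hw 0))
  obtain ⟨a, ha⟩ := eq_C_of_mul_homog (hζh K) hK (ha' K ▸ hAh K)
  obtain ⟨b, hb⟩ := eq_C_of_mul_homog (hζh K) hK (hb' K ▸ hBh K)
  have hAK : A K = C a * minors23 φ K := by rw [ha' K, ha]
  have hBK : B K = C b * minors23 φ K := by rw [hb' K, hb]
  -- Cramer identities
  have hCr : ∀ k j, w j * minors23 φ k = A k * φ 0 j + B k * φ 1 j := by
    intro k j
    fin_cases k <;> fin_cases j <;>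
      simp only [Fin.zero_eta, Fin.mk_one, Fin.reduceFinMk, Fin.isValue, eA0, eA1, eA2, eB0, eB1, eB2, e0, e1, e2] <;>
      first
        | ring1
        | linear_combination hs
        | linear_combination -hs
  refine ⟨a, b, fun j => ?_⟩
  apply mul_left_cancel₀ hK
  linear_combination hCr K j + φ 0 j * hAK + φ 1 j * hBK

/-- Suppose the maximal minors of the 2×3 matrix of linear forms `φ₁₁` are not all zero and
have no common non-constant divisor, and left multiplication by the 3×2 matrix of linear
forms `φ₂₂` is injective.  Then a pair `(u,v)` of matrices of linear forms satisfies
`v·φ₁₁ + φ₂₂·u = 0` iff `u = α·φ₁₁` and `v = −φ₂₂·α` for some constant 2×2 matrix `α`. -/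
theorem stmt3 (φ₁₁ : Matrix (Fin 2) (Fin 3) R3) (φ₂₂ : Matrix (Fin 3) (Fin 2) R3)
    (h11L : ∀ i j, (φ₁₁ i j).IsHomogeneous 1) (h22L : ∀ i j, (φ₂₂ i j).IsHomogeneous 1)
    (hnz : ∃ k, minors23 φ₁₁ k ≠ 0)
    (hnocd : ∀ d : R3, (∀ k, d ∣ minors23 φ₁₁ k) → ∃ c : ℂ, d = C c)
    (hinj : Function.Injective fun w : Fin 2 → R3 => φ₂₂.mulVec w)
    (u : Matrix (Fin 2) (Fin 3) R3) (v : Matrix (Fin 3) (Fin 2) R3)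
    (hu : ∀ i j, (u i j).IsHomogeneous 1) (hv : ∀ i j, (v i j).IsHomogeneous 1) :
    v * φ₁₁ + φ₂₂ * u = 0 ↔
      ∃ α : Matrix (Fin 2) (Fin 2) ℂ,
        u = α.map (fun c => (C c : R3)) * φ₁₁ ∧
        v = -(φ₂₂ * α.map (fun c => (C c : R3))) := by
  constructor
  · intro h
    obtain ⟨K, hK⟩ := hnz
    set ψ : Fin 3 → R3 := ![minors23 φ₁₁ 0, -minors23 φ₁₁ 1, minors23 φ₁₁ 2] with hψdef
    have e0 : minors23 φ₁₁ 0 = φ₁₁ 0 1 * φ₁₁ 1 2 - φ₁₁ 0 2 * φ₁₁ 1 1 := rfl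
    have e1 : minors23 φ₁₁ 1 = φ₁₁ 0 0 * φ₁₁ 1 2 - φ₁₁ 0 2 * φ₁₁ 1 0 := rfl
    have e2 : minors23 φ₁₁ 2 = φ₁₁ 0 0 * φ₁₁ 1 1 - φ₁₁ 0 1 * φ₁₁ 1 0 := rfl
    have hker : φ₁₁.mulVec ψ = 0 := by
      funext i
      fin_cases i <;>
        simp [Matrix.mulVec, dotProduct, Matrix.vecHead, Matrix.vecTail, Fin.sum_univ_three, hψdef, e0, e1, e2] <;> ring
    have husyz : u.mulVec ψ = 0 := by
      apply hinj
      show φ₂₂.mulVec (u.mulVec ψ) = φ₂₂.mulVec 0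
      rw [Matrix.mulVec_zero, Matrix.mulVec_mulVec]
      have h2 := congrArg (fun M : Matrix (Fin 3) (Fin 3) R3 => M.mulVec ψ) h
      simp only [Matrix.add_mulVec, Matrix.zero_mulVec] at h2
      rw [← Matrix.mulVec_mulVec, hker, Matrix.mulVec_zero, zero_add] at h2
      exact h2
    have hrow : ∀ i : Fin 2, ∃ a b : ℂ,
        ∀ j, u i j = C a * φ₁₁ 0 j + C b * φ₁₁ 1 j := by
      intro i
      apply row_syzygy φ₁₁ h11L ⟨K, hK⟩ hnocd (u i) (hu i)
      have := congrFun husyz i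
      simp only [Matrix.mulVec, dotProduct, Fin.sum_univ_three, hψdef,
        Matrix.cons_val_zero, Matrix.cons_val_one, Matrix.cons_val_two,
        Matrix.head_cons, Matrix.tail_cons, Pi.zero_apply] at this
      linear_combination this
    obtain ⟨a0, b0, h0⟩ := hrow 0
    obtain ⟨a1, b1, h1⟩ := hrow 1
    refine ⟨(Matrix.of ![![a0, b0], ![a1, b1]] : Matrix (Fin 2) (Fin 2) ℂ), ?_, ?_⟩
    · ext i j
      rw [Matrix.mul_apply, Fin.sum_univ_two]
      fin_cases i <;>
        simp [Matrix.map_apply, h0 j, h1 j]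
    · -- v = -(φ₂₂ * α)
      set M : Matrix (Fin 2) (Fin 2) R3 :=
        ((Matrix.of ![![a0, b0], ![a1, b1]] : Matrix (Fin 2) (Fin 2) ℂ)).map (fun c => (C c : R3)) with hMdef
      have hueq : u = M * φ₁₁ := by
        ext i j
        rw [Matrix.mul_apply, Fin.sum_univ_two]
        fin_cases i <;> simp [hMdef, Matrix.map_apply, h0 j, h1 j]
      have hw0 : (v + φ₂₂ * M) * φ₁₁ = 0 := by
        rw [Matrix.add_mul, Matrix.mul_assoc, ← hueq, h]
      have hwz : v + φ₂₂ * M = 0 := by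
        refine Matrix.ext fun i j => ?_
        have hrowj : ∀ j' : Fin 3,
            (v + φ₂₂ * M) i 0 * φ₁₁ 0 j' + (v + φ₂₂ * M) i 1 * φ₁₁ 1 j' = 0 := by
          intro j'
          have := congrFun (congrFun hw0 i) j'
          rw [Matrix.mul_apply, Fin.sum_univ_two] at this
          simpa using this
        have hz0 : ∀ k, (v + φ₂₂ * M) i 0 * minors23 φ₁₁ k = 0 := by
          intro k
          fin_cases k <;>
            simp only [Fin.zero_eta, Fin.mk_one, Fin.reduceFinMk, Fin.isValue, e0, e1, e2] <;>
            first
              | linear_combination (φ₁₁ 1 2) * hrowj 1 - (φ₁₁ 1 1) * hrowj 2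
              | linear_combination (φ₁₁ 1 2) * hrowj 0 - (φ₁₁ 1 0) * hrowj 2
              | linear_combination (φ₁₁ 1 1) * hrowj 0 - (φ₁₁ 1 0) * hrowj 1
        have hz1 : ∀ k, (v + φ₂₂ * M) i 1 * minors23 φ₁₁ k = 0 := by
          intro k
          fin_cases k <;>
            simp only [Fin.zero_eta, Fin.mk_one, Fin.reduceFinMk, Fin.isValue, e0, e1, e2] <;>
            first
              | linear_combination (φ₁₁ 0 1) * hrowj 2 - (φ₁₁ 0 2) * hrowj 1
              | linear_combination (φ₁₁ 0 0) * hrowj 2 - (φ₁₁ 0 2) * hrowj 0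
              | linear_combination (φ₁₁ 0 0) * hrowj 1 - (φ₁₁ 0 1) * hrowj 0
        fin_cases j
        · simpa using (mul_eq_zero.1 (hz0 K)).resolve_right hK
        · simpa using (mul_eq_zero.1 (hz1 K)).resolve_right hK
      exact eq_neg_of_add_eq_zero_left hwz
  · rintro ⟨α, hueq, hveq⟩
    rw [hueq, hveq, Matrix.neg_mul, Matrix.mul_assoc, neg_add_cancel]
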